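/- Let G be a connected graph with δ(G) ≥ 4 and at least 5 vertices, embeddable on a surface M whose Euler characteristic χ is as large as possible, with girth g(G) = g < ∞. Then b_tr(G) ≤ (4g/(g−2))(1 − χ/|V(G)|) + Δ(G) − 4 ≤ −12χ/|V(G)| + Δ(G) + 8. -/

import Mathlib

open SimpleGraph Finset

variable {V : Type*} [Fintype V] [DecidableEq V]

/-- The number of orbits (cycles together with fixed points) of a permutation of a finite type. -/
noncomputable def permNumOrbits {α : Type*} [Fintype α] [DecidableEq α] (ψ : Equiv.Perm α) : ℕ :=
  Multiset.card ψ.cycleType + (Finset.univ.filter fun a => ψ a = a).card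

/-- A combinatorial (2-cell) embedding scheme of a graph on a surface:
a rotation system together with an edge signature (Mohar–Thomassen). -/
structure SimpleGraph.EmbeddingScheme (G : SimpleGraph V) [DecidableRel G.Adj] where
  rot : Equiv.Perm G.Dart
  rot_fst : ∀ d : G.Dart, (rot d).toProd.1 = d.toProd.1
  rot_cyclic : ∀ d e : G.Dart, d.toProd.1 = e.toProd.1 → ∃ k : ℕ, (rot ^ k) d = e
  sign : G.Dart → ℤˣ
  sign_symm : ∀ d : G.Dart, sign d.symm = sign d

namespace SimpleGraph.EmbeddingScheme

variable {G : SimpleGraph V} [DecidableRel G.Adj] (S : G.EmbeddingScheme)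

def swapPerm : Equiv.Perm (G.Dart × ℤˣ) :=
  Function.Involutive.toPerm (fun p => (p.1.symm, p.2 * S.sign p.1)) (by
    intro p
    simp [SimpleGraph.Dart.symm_symm, S.sign_symm p.1, mul_assoc, Int.units_mul_self])

def rotPerm : Equiv.Perm (G.Dart × ℤˣ) where
  toFun p := ((S.rot ^ (p.2 : ℤ)) p.1, p.2)
  invFun p := ((S.rot ^ (-(p.2 : ℤ))) p.1, p.2)
  left_inv p := by
    simp [← Equiv.Perm.mul_apply, ← zpow_add]
  right_inv p := by
    show ((S.rot ^ (p.2 : ℤ)) ((S.rot ^ (-(p.2 : ℤ))) p.1), p.2) = p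
    rw [← Equiv.Perm.mul_apply, ← zpow_add]
    simp

/-- The face-tracing permutation on signed darts. -/
def faceMap : Equiv.Perm (G.Dart × ℤˣ) := S.swapPerm.trans S.rotPerm

/-- Each face is traced by exactly two orbits of the face-tracing permutation. -/
noncomputable def numFaces : ℕ := permNumOrbits S.faceMap / 2

/-- The Euler characteristic of the closed surface determined by the scheme. -/
noncomputable def eulerChar : ℤ :=
  (Fintype.card V : ℤ) - (G.edgeFinset.card : ℤ) + (S.numFaces : ℤ)

/-- The scheme describes an embedding on an orientable surface iff its signature
is switching-equivalent to the all-positive signature. -/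
def IsOrientable : Prop := ∃ θ : V → ℤˣ, ∀ d : G.Dart, S.sign d = θ d.toProd.1 * θ d.toProd.2

end SimpleGraph.EmbeddingScheme

/-- `G` has orientable genus `g`. -/
def SimpleGraph.HasOrientableGenus (G : SimpleGraph V) [DecidableRel G.Adj] (g : ℕ) : Prop :=
  (∃ S : G.EmbeddingScheme, S.IsOrientable ∧ S.eulerChar = 2 - 2 * (g : ℤ)) ∧
  ∀ g' : ℕ, g' < g → ¬ ∃ S : G.EmbeddingScheme, S.IsOrientable ∧ S.eulerChar = 2 - 2 * (g' : ℤ)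

/-- `G` has nonorientable genus `k`. -/
def SimpleGraph.HasNonorientableGenus (G : SimpleGraph V) [DecidableRel G.Adj] (k : ℕ) : Prop :=
  (∃ S : G.EmbeddingScheme, ¬ S.IsOrientable ∧ S.eulerChar = 2 - (k : ℤ)) ∧
  ∀ k' : ℕ, k' < k → ¬ ∃ S : G.EmbeddingScheme, ¬ S.IsOrientable ∧ S.eulerChar = 2 - (k' : ℤ)

/-- `G` is planar: every component embeds in the sphere. -/
def SimpleGraph.IsPlanar (G : SimpleGraph V) [DecidableRel G.Adj] : Prop :=
  ∃ S : G.EmbeddingScheme, S.IsOrientable ∧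
    S.eulerChar = 2 * (Nat.card G.ConnectedComponent : ℤ)

/-- `S` is a total dominating set: every vertex has a neighbour in `S`. -/
def SimpleGraph.IsTotalDominatingSet (G : SimpleGraph V) (S : Finset V) : Prop :=
  ∀ v : V, ∃ u ∈ S, G.Adj u v

noncomputable def SimpleGraph.totalDominationNumber (G : SimpleGraph V) : ℕ :=
  sInf {k : ℕ | ∃ S : Finset V, G.IsTotalDominatingSet S ∧ S.card = k}

/-- The spanning subgraph of `G` keeping only edges meeting `S`. -/
def SimpleGraph.weakSubgraph (G : SimpleGraph V) (S : Finset V) : SimpleGraph V where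
  Adj u v := G.Adj u v ∧ (u ∈ S ∨ v ∈ S)
  symm := ⟨fun u v h => ⟨h.1.symm, h.2.symm⟩⟩
  loopless := ⟨fun v h => G.loopless.irrefl v h.1⟩

/-- `S` is a weakly connected dominating set. -/
def SimpleGraph.IsWeaklyConnectedDominatingSet (G : SimpleGraph V) (S : Finset V) : Prop :=
  S.Nonempty ∧ (G.weakSubgraph S).Connected

noncomputable def SimpleGraph.weaklyConnectedDominationNumber (G : SimpleGraph V) : ℕ :=
  sInf {k : ℕ | ∃ S : Finset V, G.IsWeaklyConnectedDominatingSet S ∧ S.card = k}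

/-- `S` is a connected dominating set. -/
def SimpleGraph.IsConnectedDominatingSet (G : SimpleGraph V) (S : Finset V) : Prop :=
  (∀ v ∉ S, ∃ u ∈ S, G.Adj u v) ∧ (G.induce (S : Set V)).Connected

noncomputable def SimpleGraph.connectedDominationNumber (G : SimpleGraph V) : ℕ :=
  sInf {k : ℕ | ∃ S : Finset V, G.IsConnectedDominatingSet S ∧ S.card = k}

/-- `S` is a restrained dominating set. -/
def SimpleGraph.IsRestrainedDominatingSet (G : SimpleGraph V) (S : Finset V) : Prop :=
  ∀ v ∉ S, (∃ u ∈ S, G.Adj u v) ∧ (∃ w ∉ S, G.Adj w v)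

noncomputable def SimpleGraph.restrainedDominationNumber (G : SimpleGraph V) : ℕ :=
  sInf {k : ℕ | ∃ S : Finset V, G.IsRestrainedDominatingSet S ∧ S.card = k}

/-- The restrained bondage number. -/
noncomputable def SimpleGraph.restrainedBondageNumber (G : SimpleGraph V) : ℕ :=
  sInf {k : ℕ | ∃ F : Finset (Sym2 V), ↑F ⊆ G.edgeSet ∧ F.card = k ∧
    G.restrainedDominationNumber < (G.deleteEdges ↑F).restrainedDominationNumber}

/-- `S` is a total restrained dominating set. -/
def SimpleGraph.IsTotalRestrainedDominatingSet (G : SimpleGraph V) (S : Finset V) : Prop :=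
  (∀ v : V, ∃ u ∈ S, G.Adj u v) ∧ ∀ v ∉ S, ∃ w ∉ S, G.Adj w v

noncomputable def SimpleGraph.totalRestrainedDominationNumber (G : SimpleGraph V) : ℕ :=
  sInf {k : ℕ | ∃ S : Finset V, G.IsTotalRestrainedDominatingSet S ∧ S.card = k}

/-- The total restrained bondage number (`⊤` if no suitable edge set exists). -/
noncomputable def SimpleGraph.totalRestrainedBondageNumber (G : SimpleGraph V) : ℕ∞ :=
  sInf {k : ℕ∞ | ∃ F : Finset (Sym2 V), ↑F ⊆ G.edgeSet ∧ (F.card : ℕ∞) = k ∧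
    (∀ v : V, ∃ u : V, (G.deleteEdges ↑F).Adj u v) ∧
    G.totalRestrainedDominationNumber < (G.deleteEdges ↑F).totalRestrainedDominationNumber}

/-- Roman dominating function. -/
def SimpleGraph.IsRomanDominatingFunction (G : SimpleGraph V) (f : V → ℕ) : Prop :=
  (∀ v : V, f v ≤ 2) ∧ ∀ v : V, f v = 0 → ∃ u : V, G.Adj u v ∧ f u = 2

noncomputable def SimpleGraph.romanDominationNumber (G : SimpleGraph V) : ℕ :=
  sInf {k : ℕ | ∃ f : V → ℕ, G.IsRomanDominatingFunction f ∧ ∑ v : V, f v = k}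

noncomputable def SimpleGraph.romanBondageNumber (G : SimpleGraph V) : ℕ :=
  sInf {k : ℕ | ∃ F : Finset (Sym2 V), ↑F ⊆ G.edgeSet ∧ F.card = k ∧
    G.romanDominationNumber < (G.deleteEdges ↑F).romanDominationNumber}

/-- The minimum edge-degree `ξ(G)`. -/
noncomputable def SimpleGraph.minEdgeDegree (G : SimpleGraph V) [DecidableRel G.Adj] : ℕ :=
  sInf {k : ℕ | ∃ d : G.Dart, G.degree d.toProd.1 + G.degree d.toProd.2 - 2 = k}

/-- A restricted edge-cut: removing it disconnects `G` leaving no isolated vertex. -/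
def SimpleGraph.IsRestrictedEdgeCut (G : SimpleGraph V) (F : Finset (Sym2 V)) : Prop :=
  ↑F ⊆ G.edgeSet ∧ ¬ (G.deleteEdges ↑F).Connected ∧
    ∀ v : V, ∃ u : V, (G.deleteEdges ↑F).Adj u v

/-- The restricted edge-connectivity `λ'(G)`. -/
noncomputable def SimpleGraph.restrictedEdgeConnectivity (G : SimpleGraph V) : ℕ :=
  sInf {k : ℕ | ∃ F : Finset (Sym2 V), G.IsRestrictedEdgeCut F ∧ F.card = k}

/-- `G` is a star: all edges share a common vertex. -/
def SimpleGraph.IsStar (G : SimpleGraph V) : Prop :=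
  ∃ c : V, ∀ e ∈ G.edgeSet, c ∈ e

/-- The average degree `2|E|/|V|` of `G`. -/
noncomputable def SimpleGraph.averageDegree (G : SimpleGraph V) [DecidableRel G.Adj] : ℝ :=
  2 * (G.edgeFinset.card : ℝ) / (Fintype.card V : ℝ)

def h1 (x : ℕ) : ℕ := if x ≤ 3 then 2 * x + 13 else 4 * x + 7
def h2 (x : ℕ) : ℕ := if x = 0 then 8 else 4 * x + 5
def k1 (x : ℕ) : ℕ := if x ≤ 2 then 2 * x + 11 else if x ≤ 5 then 2 * x + 9 else 2 * x + 7
def k2 (x : ℕ) : ℕ := if x = 1 then 8 else 2 * x + 5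
set_option linter.unusedVariables false
set_option linter.unusedSectionVars false

section Construction

variable {V : Type*} [Fintype V] [DecidableEq V]

lemma univ_isTRDS (G : SimpleGraph V) (h : ∀ w : V, ∃ y : V, G.Adj y w) :
    G.IsTotalRestrainedDominatingSet Finset.univ :=
  ⟨fun w => (h w).imp (fun y hy => ⟨Finset.mem_univ y, hy⟩),
   fun w hw => absurd (Finset.mem_univ w) hw⟩

lemma construction_main (G : SimpleGraph V) [DecidableRel G.Adj]
    (hδ : ∀ w : V, 4 ≤ G.degree w) {u v v' : V} (huv : G.Adj u v) (huv' : G.Adj u v')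
    (hvv' : v ≠ v') :
    ∃ F : Finset (Sym2 V), ↑F ⊆ G.edgeSet ∧
      F.card + 4 ≤ G.degree u + G.degree v + G.degree v' ∧
      (∀ w : V, ∃ y : V, (G.deleteEdges ↑F).Adj y w) ∧
      G.totalRestrainedDominationNumber < (G.deleteEdges ↑F).totalRestrainedDominationNumber := by
  classical
  have hune : u ≠ v := huv.ne
  have hune' : u ≠ v' := huv'.ne
  set e1 : Sym2 V := s(u, v) with he1
  set e2 : Sym2 V := s(u, v') with he2
  have he12 : e1 ≠ e2 := by
    intro h
    rcases Sym2.eq_iff.mp h with ⟨-, h2⟩ | ⟨h2, -⟩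
    · exact hvv' h2
    · exact hune' h2
  set A : Finset (Sym2 V) := G.incidenceFinset u ∪ G.incidenceFinset v ∪ G.incidenceFinset v'
    with hA
  set F : Finset (Sym2 V) := (A.erase e1).erase e2 with hF
  -- membership in F
  have hmemF : ∀ e : Sym2 V, e ∈ F ↔
      (e ≠ e2 ∧ e ≠ e1 ∧ (e ∈ G.incidenceFinset u ∨ e ∈ G.incidenceFinset v ∨
        e ∈ G.incidenceFinset v')) := by
    intro e
    simp [hF, hA, Finset.mem_erase, Finset.mem_union, and_assoc]
  have hFedge : (F : Set (Sym2 V)) ⊆ G.edgeSet := by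
    intro e he
    rw [Finset.mem_coe, hmemF] at he
    rcases he.2.2 with h | h | h <;>
    · rw [SimpleGraph.mem_incidenceFinset] at h
      exact h.1
  set Gd := G.deleteEdges (F : Set (Sym2 V)) with hGd
  -- adjacency characterization
  have hadj : ∀ a b : V, Gd.Adj a b ↔ (G.Adj a b ∧
      (s(a,b) = e1 ∨ s(a,b) = e2 ∨
        (a ≠ u ∧ a ≠ v ∧ a ≠ v' ∧ b ≠ u ∧ b ≠ v ∧ b ≠ v'))) := by
    intro a b
    rw [hGd, SimpleGraph.deleteEdges_adj]
    constructor
    · rintro ⟨hab, hnot⟩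
      refine ⟨hab, ?_⟩
      rw [Finset.mem_coe, hmemF] at hnot
      push_neg at hnot
      by_cases h1 : s(a,b) = e1
      · exact Or.inl h1
      by_cases h2 : s(a,b) = e2
      · exact Or.inr (Or.inl h2)
      · have h3 := hnot h2 h1
        refine Or.inr (Or.inr ?_)
        have hmu := h3.1
        have hmv := h3.2.1
        have hmv' := h3.2.2
        rw [SimpleGraph.mem_incidenceFinset] at hmu hmv hmv'
        have hu' : u ∉ s(a,b) := fun hm => hmu ⟨hab, hm⟩
        have hv'' : v ∉ s(a,b) := fun hm => hmv ⟨hab, hm⟩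
        have hv''' : v' ∉ s(a,b) := fun hm => hmv' ⟨hab, hm⟩
        simp only [Sym2.mem_iff, not_or] at hu' hv'' hv'''
        exact ⟨fun h => hu'.1 h.symm, fun h => hv''.1 h.symm, fun h => hv'''.1 h.symm,
          fun h => hu'.2 h.symm, fun h => hv''.2 h.symm, fun h => hv'''.2 h.symm⟩
    · rintro ⟨hab, hcase⟩
      refine ⟨hab, fun hmem => ?_⟩
      rw [Finset.mem_coe, hmemF] at hmem
      obtain ⟨hne2, hne1, hinc⟩ := hmem
      rcases hcase with h | h | h
      · exact hne1 h
      · exact hne2 h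
      · obtain ⟨hau, hav, hav', hbu, hbv, hbv'⟩ := h
        rcases hinc with hi | hi | hi <;>
        · rw [SimpleGraph.mem_incidenceFinset] at hi
          rcases Sym2.mem_iff.mp hi.2 with he | he <;> simp_all
  have f1 : ∀ y : V, Gd.Adj y v → y = u := by
    intro y hy
    rcases (hadj y v).mp hy with ⟨hyv, hc | hc | hc⟩
    · rcases Sym2.eq_iff.mp hc with ⟨h1, -⟩ | ⟨-, h2⟩
      · exact h1
      · exact absurd h2.symm hune
    · rcases Sym2.eq_iff.mp hc with ⟨-, h2⟩ | ⟨-, h2⟩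
      · exact absurd h2 hvv'
      · exact absurd h2.symm hune
    · exact absurd rfl hc.2.2.2.2.1
  have f2 : ∀ y : V, Gd.Adj y v' → y = u := by
    intro y hy
    rcases (hadj y v').mp hy with ⟨hyv, hc | hc | hc⟩
    · rcases Sym2.eq_iff.mp hc with ⟨-, h2⟩ | ⟨-, h2⟩
      · exact absurd h2.symm hvv'
      · exact absurd h2.symm hune'
    · rcases Sym2.eq_iff.mp hc with ⟨h1, -⟩ | ⟨-, h2⟩
      · exact h1
      · exact absurd h2.symm hune'
    · exact absurd rfl hc.2.2.2.2.2
  have f1' : Gd.Adj u v := (hadj u v).mpr ⟨huv, Or.inl rfl⟩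
  have f2' : Gd.Adj u v' := (hadj u v').mpr ⟨huv', Or.inr (Or.inl rfl)⟩
  have f4 : ∀ w y : V, w ≠ u → w ≠ v → w ≠ v' → Gd.Adj y w →
      G.Adj y w ∧ (y ≠ u ∧ y ≠ v ∧ y ≠ v') := by
    intro w y hwu hwv hwv' hy
    rcases (hadj y w).mp hy with ⟨hyw, hc | hc | hc⟩
    · rcases Sym2.eq_iff.mp hc with ⟨-, h2⟩ | ⟨-, h2⟩
      · exact absurd h2 hwv
      · exact absurd h2 hwu
    · rcases Sym2.eq_iff.mp hc with ⟨-, h2⟩ | ⟨-, h2⟩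
      · exact absurd h2 hwv'
      · exact absurd h2 hwu
    · exact ⟨hyw, hc.1, hc.2.1, hc.2.2.1⟩
  have hnbr : ∀ (x a b c : V), ∃ y, G.Adj x y ∧ y ≠ a ∧ y ≠ b ∧ y ≠ c := by
    intro x a b c
    have hsub : ¬ G.neighborFinset x ⊆ {a, b, c} := by
      intro hsub
      have h1 := Finset.card_le_card hsub
      rw [SimpleGraph.card_neighborFinset_eq_degree] at h1
      have h2 : ({a, b, c} : Finset V).card ≤ 3 :=
        (Finset.card_insert_le _ _).trans (Nat.succ_le_succ ((Finset.card_insert_le _ _).trans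
          (by simp)))
      have := hδ x
      omega
    obtain ⟨y, hy, hynot⟩ := Finset.not_subset.mp hsub
    simp only [Finset.mem_insert, Finset.mem_singleton, not_or] at hynot
    exact ⟨y, (SimpleGraph.mem_neighborFinset _ _ _).mp hy, hynot.1, hynot.2.1, hynot.2.2⟩
  have hnoiso : ∀ w : V, ∃ y : V, Gd.Adj y w := by
    intro w
    by_cases hwu : w = u
    · exact ⟨v, hwu ▸ f1'.symm⟩
    by_cases hwv : w = v
    · exact ⟨u, hwv ▸ f1'⟩
    by_cases hwv' : w = v'
    · exact ⟨u, hwv' ▸ f2'⟩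
    · obtain ⟨y, hyadj, hyu, hyv, hyv'⟩ := hnbr w u v v'
      exact ⟨y, (hadj y w).mpr ⟨hyadj.symm, Or.inr (Or.inr ⟨hyu, hyv, hyv', hwu, hwv, hwv'⟩)⟩⟩
  have hcard4 : F.card + 4 ≤ G.degree u + G.degree v + G.degree v' := by
    have he1u : e1 ∈ G.incidenceFinset u := by
      rw [SimpleGraph.mem_incidenceFinset]
      exact ⟨G.mem_edgeSet.mpr huv, Sym2.mem_mk_left u v⟩
    have he2u : e2 ∈ G.incidenceFinset u := by
      rw [SimpleGraph.mem_incidenceFinset]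
      exact ⟨G.mem_edgeSet.mpr huv', Sym2.mem_mk_left u v'⟩
    have he1v : e1 ∈ G.incidenceFinset v := by
      rw [SimpleGraph.mem_incidenceFinset]
      exact ⟨G.mem_edgeSet.mpr huv, Sym2.mem_mk_right u v⟩
    have he2v' : e2 ∈ G.incidenceFinset v' := by
      rw [SimpleGraph.mem_incidenceFinset]
      exact ⟨G.mem_edgeSet.mpr huv', Sym2.mem_mk_right u v'⟩
    have hsub : F ⊆ ((G.incidenceFinset u).erase e1).erase e2 ∪ ((G.incidenceFinset v).erase e1)
        ∪ ((G.incidenceFinset v').erase e2) := by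
      intro e he
      rw [hmemF] at he
      obtain ⟨hne2, hne1, hinc⟩ := he
      rcases hinc with h | h | h
      · exact Finset.mem_union_left _ (Finset.mem_union_left _
          (Finset.mem_erase.mpr ⟨hne2, Finset.mem_erase.mpr ⟨hne1, h⟩⟩))
      · exact Finset.mem_union_left _ (Finset.mem_union_right _
          (Finset.mem_erase.mpr ⟨hne1, h⟩))
      · exact Finset.mem_union_right _ (Finset.mem_erase.mpr ⟨hne2, h⟩)
    have hc1 : (((G.incidenceFinset u).erase e1).erase e2).card = G.degree u - 2 := by
      rw [Finset.card_erase_of_mem (Finset.mem_erase.mpr ⟨fun h => he12 h.symm, he2u⟩),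
        Finset.card_erase_of_mem he1u, G.card_incidenceFinset_eq_degree]
      omega
    have hc2 : ((G.incidenceFinset v).erase e1).card = G.degree v - 1 := by
      rw [Finset.card_erase_of_mem he1v, G.card_incidenceFinset_eq_degree]
    have hc3 : ((G.incidenceFinset v').erase e2).card = G.degree v' - 1 := by
      rw [Finset.card_erase_of_mem he2v', G.card_incidenceFinset_eq_degree]
    have hF1 := Finset.card_le_card hsub
    have hF2 := Finset.card_union_le (((G.incidenceFinset u).erase e1).erase e2 ∪
      ((G.incidenceFinset v).erase e1)) ((G.incidenceFinset v').erase e2)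
    have hF3 := Finset.card_union_le (((G.incidenceFinset u).erase e1).erase e2)
      ((G.incidenceFinset v).erase e1)
    have hdu := hδ u
    have hdv := hδ v
    have hdv' := hδ v'
    omega
  -- a minimum TRDS of the deleted graph
  have hset : {k : ℕ | ∃ S : Finset V, Gd.IsTotalRestrainedDominatingSet S ∧ S.card = k}.Nonempty :=
    ⟨Finset.univ.card, Finset.univ, univ_isTRDS Gd hnoiso, rfl⟩
  obtain ⟨S', hS', hScard⟩ := Nat.sInf_mem hset
  obtain ⟨x0, hx0S, hx0adj⟩ := hS'.1 v
  have huS : u ∈ S' := (f1 x0 hx0adj) ▸ hx0S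
  have hvS : v ∈ S' := by
    by_contra hv
    obtain ⟨y, hyS, hyadj⟩ := hS'.2 v hv
    exact hyS ((f1 y hyadj) ▸ huS)
  have hv'S : v' ∈ S' := by
    by_contra hv
    obtain ⟨y, hyS, hyadj⟩ := hS'.2 v' hv
    exact hyS ((f2 y hyadj) ▸ huS)
  set B : Finset V := S' \ {u, v, v'} with hB
  have hBsub : B ⊆ S' := Finset.sdiff_subset
  have hBu : u ∉ B := by simp [hB]
  have hBv : v ∉ B := by simp [hB]
  have hBv' : v' ∉ B := by simp [hB]
  have hBmem : ∀ w, w ∈ S' → w ≠ u → w ≠ v → w ≠ v' → w ∈ B := by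
    intro w h1 h2 h3 h4
    simp [hB, h1, h2, h3, h4]
  have hBcard : B.card + 3 = S'.card := by
    have hsub : ({u, v, v'} : Finset V) ⊆ S' := by
      intro x hx
      simp only [Finset.mem_insert, Finset.mem_singleton] at hx
      rcases hx with rfl | rfl | rfl <;> assumption
    have h3 : ({u, v, v'} : Finset V).card = 3 := by
      rw [Finset.card_insert_of_notMem (by simp [hune, hune']),
        Finset.card_insert_of_notMem (by simp [hvv']), Finset.card_singleton]
    have h4 := Finset.card_le_card hsub
    rw [hB, Finset.card_sdiff_of_subset hsub, h3]
    omega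
  have domB : ∀ w : V, w ≠ u → w ≠ v → w ≠ v' → ∃ b ∈ B, G.Adj b w := by
    intro w hwu hwv hwv'
    obtain ⟨s, hsS, hsadj⟩ := hS'.1 w
    obtain ⟨hGsw, hsne⟩ := f4 w s hwu hwv hwv' hsadj
    exact ⟨s, hBmem s hsS hsne.1 hsne.2.1 hsne.2.2, hGsw⟩
  have witB : ∀ w : V, w ∉ S' → ∃ y, y ∉ S' ∧ G.Adj y w := by
    intro w hw
    obtain ⟨y, hyS, hyadj⟩ := hS'.2 w hw
    exact ⟨y, hyS, (SimpleGraph.deleteEdges_adj.mp hyadj).1⟩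
  refine ⟨F, hFedge, hcard4, hnoiso, ?_⟩
  suffices h : ∃ T : Finset V, G.IsTotalRestrainedDominatingSet T ∧ T.card + 1 ≤ S'.card by
    obtain ⟨T, hT, hTc⟩ := h
    have h1 : G.totalRestrainedDominationNumber ≤ T.card := Nat.sInf_le ⟨T, hT, rfl⟩
    have h2 : S'.card = Gd.totalRestrainedDominationNumber := hScard
    rw [← hGd]
    omega
  by_cases hp' : ∃ b ∈ B, G.Adj b v'
  · by_cases hp : ∃ b ∈ B, G.Adj b v
    · -- T = insert v B
      refine ⟨insert v B, ⟨?_, ?_⟩, ?_⟩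
      · intro w
        by_cases hwu : w = u
        · exact ⟨v, Finset.mem_insert_self _ _, hwu ▸ huv.symm⟩
        by_cases hwv : w = v
        · obtain ⟨b, hb, hbadj⟩ := hp
          exact ⟨b, Finset.mem_insert_of_mem hb, hwv ▸ hbadj⟩
        by_cases hwv' : w = v'
        · obtain ⟨b, hb, hbadj⟩ := hp'
          exact ⟨b, Finset.mem_insert_of_mem hb, hwv' ▸ hbadj⟩
        · obtain ⟨b, hb, hbadj⟩ := domB w hwu hwv hwv'
          exact ⟨b, Finset.mem_insert_of_mem hb, hbadj⟩
      · intro w hw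
        by_cases hwu : w = u
        · refine ⟨v', ?_, hwu ▸ huv'.symm⟩
          simp only [Finset.mem_insert, not_or]
          exact ⟨fun h => hvv' h.symm, hBv'⟩
        by_cases hwv : w = v
        · exact absurd (by rw [hwv]; exact Finset.mem_insert_self _ _ : w ∈ insert v B) hw
        by_cases hwv' : w = v'
        · refine ⟨u, ?_, hwv' ▸ huv'⟩
          simp only [Finset.mem_insert, not_or]
          exact ⟨hune, hBu⟩
        · have hwS : w ∉ S' := fun hwS =>
            hw (Finset.mem_insert_of_mem (hBmem w hwS hwu hwv hwv'))
          obtain ⟨y, hyS, hyadj⟩ := witB w hwS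
          refine ⟨y, fun hyT => hyS ?_, hyadj⟩
          rcases Finset.mem_insert.mp hyT with rfl | hyB
          · exact hvS
          · exact hBsub hyB
      · have hc : (insert v B).card = B.card + 1 := Finset.card_insert_of_notMem hBv
        omega
    · -- ¬hp : T = insert u (insert v' B)
      refine ⟨insert u (insert v' B), ⟨?_, ?_⟩, ?_⟩
      · intro w
        by_cases hwu : w = u
        · exact ⟨v', Finset.mem_insert_of_mem (Finset.mem_insert_self _ _), hwu ▸ huv'.symm⟩
        by_cases hwv : w = v
        · exact ⟨u, Finset.mem_insert_self _ _, hwv ▸ huv⟩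
        by_cases hwv' : w = v'
        · exact ⟨u, Finset.mem_insert_self _ _, hwv' ▸ huv'⟩
        · obtain ⟨b, hb, hbadj⟩ := domB w hwu hwv hwv'
          exact ⟨b, Finset.mem_insert_of_mem (Finset.mem_insert_of_mem hb), hbadj⟩
      · intro w hw
        by_cases hwu : w = u
        · exact absurd (by rw [hwu]; exact Finset.mem_insert_self _ _ : w ∈ insert u (insert v' B)) hw
        by_cases hwv' : w = v'
        · exact absurd (by rw [hwv']; exact Finset.mem_insert_of_mem (Finset.mem_insert_self _ _) : w ∈ insert u (insert v' B)) hw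
        by_cases hwv : w = v
        · obtain ⟨y, hyadj, hyu, hyv', hyv'2⟩ := hnbr v u v' v'
          have hyB : y ∉ B := fun hyB => hp ⟨y, hyB, hyadj.symm⟩
          refine ⟨y, ?_, hwv ▸ hyadj.symm⟩
          simp only [Finset.mem_insert, not_or]
          exact ⟨hyu, hyv', hyB⟩
        · have hwS : w ∉ S' := fun hwS => hw (Finset.mem_insert_of_mem
            (Finset.mem_insert_of_mem (hBmem w hwS hwu hwv hwv')))
          obtain ⟨y, hyS, hyadj⟩ := witB w hwS
          refine ⟨y, fun hyT => hyS ?_, hyadj⟩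
          rcases Finset.mem_insert.mp hyT with rfl | hyT2
          · exact huS
          rcases Finset.mem_insert.mp hyT2 with rfl | hyB
          · exact hv'S
          · exact hBsub hyB
      · have hc1 : (insert v' B).card = B.card + 1 := Finset.card_insert_of_notMem hBv'
        have hc2 : (insert u (insert v' B)).card ≤ (insert v' B).card + 1 :=
          Finset.card_insert_le _ _
        omega
  · -- ¬hp' : T = insert u (insert v B)
    refine ⟨insert u (insert v B), ⟨?_, ?_⟩, ?_⟩
    · intro w
      by_cases hwu : w = u
      · exact ⟨v, Finset.mem_insert_of_mem (Finset.mem_insert_self _ _), hwu ▸ huv.symm⟩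
      by_cases hwv : w = v
      · exact ⟨u, Finset.mem_insert_self _ _, hwv ▸ huv⟩
      by_cases hwv' : w = v'
      · exact ⟨u, Finset.mem_insert_self _ _, hwv' ▸ huv'⟩
      · obtain ⟨b, hb, hbadj⟩ := domB w hwu hwv hwv'
        exact ⟨b, Finset.mem_insert_of_mem (Finset.mem_insert_of_mem hb), hbadj⟩
    · intro w hw
      by_cases hwu : w = u
      · exact absurd (by rw [hwu]; exact Finset.mem_insert_self _ _ : w ∈ insert u (insert v B)) hw
      by_cases hwv : w = v
      · exact absurd (by rw [hwv]; exact Finset.mem_insert_of_mem (Finset.mem_insert_self _ _) : w ∈ insert u (insert v B)) hw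
      by_cases hwv' : w = v'
      · obtain ⟨y, hyadj, hyu, hyv, hyv2⟩ := hnbr v' u v v
        have hyB : y ∉ B := fun hyB => hp' ⟨y, hyB, hyadj.symm⟩
        refine ⟨y, ?_, hwv' ▸ hyadj.symm⟩
        simp only [Finset.mem_insert, not_or]
        exact ⟨hyu, hyv, hyB⟩
      · have hwS : w ∉ S' := fun hwS => hw (Finset.mem_insert_of_mem
          (Finset.mem_insert_of_mem (hBmem w hwS hwu hwv hwv')))
        obtain ⟨y, hyS, hyadj⟩ := witB w hwS
        refine ⟨y, fun hyT => hyS ?_, hyadj⟩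
        rcases Finset.mem_insert.mp hyT with rfl | hyT2
        · exact huS
        rcases Finset.mem_insert.mp hyT2 with rfl | hyB
        · exact hvS
        · exact hBsub hyB
    · have hc1 : (insert v B).card = B.card + 1 := Finset.card_insert_of_notMem hBv
      have hc2 : (insert u (insert v B)).card ≤ (insert v B).card + 1 :=
        Finset.card_insert_le _ _
      omega

end Construction
section Cherry

variable {V : Type*} [Fintype V] [DecidableEq V]

lemma cherry_exists (G : SimpleGraph V) [DecidableRel G.Adj] [Nonempty V]
    (hδ : ∀ w : V, 4 ≤ G.degree w) :
    ∃ u v v' : V, G.Adj u v ∧ G.Adj u v' ∧ v ≠ v' ∧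
      ((G.degree u + G.degree v + G.degree v' : ℕ) : ℝ) ≤
        4 * (G.edgeFinset.card : ℝ) / (Fintype.card V : ℝ) + (G.maxDegree : ℝ) := by
  classical
  set n : ℕ := Fintype.card V with hn
  have hn0 : 0 < (n : ℝ) := by
    have := Fintype.card_pos (α := V)
    positivity
  set t : ℝ := 2 * (G.edgeFinset.card : ℝ) / (n : ℝ) with ht
  set D : ℝ := (G.maxDegree : ℝ) with hD
  have h2t : 4 * (G.edgeFinset.card : ℝ) / (n : ℝ) = 2 * t := by
    rw [ht]; ring
  have hsum : ∑ w : V, (G.degree w : ℝ) = (n : ℝ) * t := by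
    have hs := SimpleGraph.sum_degrees_eq_twice_card_edges G
    have hs' : ∑ w : V, (G.degree w : ℝ) = 2 * (G.edgeFinset.card : ℝ) := by
      exact_mod_cast hs
    rw [hs', ht]
    field_simp
  have hdD : ∀ w : V, (G.degree w : ℝ) ≤ D := fun w =>
    Nat.cast_le.mpr (G.degree_le_maxDegree w)
  have hcherry : ∀ x : V, ∃ a b : V, G.Adj x a ∧ G.Adj x b ∧ a ≠ b := by
    intro x
    have h2 : 1 < (G.neighborFinset x).card := by
      rw [SimpleGraph.card_neighborFinset_eq_degree]
      have := hδ x; omega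
    obtain ⟨a, ha, b, hb, hab⟩ := Finset.one_lt_card.mp h2
    exact ⟨a, b, (SimpleGraph.mem_neighborFinset _ _ _).mp ha,
      (SimpleGraph.mem_neighborFinset _ _ _).mp hb, hab⟩
  by_contra hcon
  push_neg at hcon
  rw [h2t] at hcon
  -- hcon : ∀ u v v', Adj u v → Adj u v' → v ≠ v' → 2t + D < deg u + deg v + deg v'
  have hcon' : ∀ u v v' : V, G.Adj u v → G.Adj u v' → v ≠ v' →
      2 * t + D < (G.degree u : ℝ) + (G.degree v : ℝ) + (G.degree v' : ℝ) := by
    intro u v v' h1 h2 h3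
    have := hcon u v v' h1 h2 h3
    push_cast at this
    linarith
  by_cases hDt : D ≤ t
  · obtain ⟨a, b, h1, h2, h3⟩ := hcherry (Classical.arbitrary V)
    have := hcon' _ a b h1 h2 h3
    have d1 := hdD (Classical.arbitrary V)
    have d2 := hdD a
    have d3 := hdD b
    linarith
  · push_neg at hDt
    set L : Finset V := Finset.univ.filter (fun w => (G.degree w : ℝ) ≤ t) with hL
    have hLne : L.Nonempty := by
      by_contra hLe
      rw [Finset.not_nonempty_iff_eq_empty, Finset.filter_eq_empty_iff] at hLe
      have hlt : ∀ w ∈ Finset.univ, t < (G.degree w : ℝ) := by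
        intro w _
        exact lt_of_not_ge (hLe (Finset.mem_univ w))
      have := Finset.sum_lt_sum_of_nonempty Finset.univ_nonempty hlt
      rw [Finset.sum_const, Finset.card_univ, ← hn, nsmul_eq_mul] at this
      rw [hsum] at this
      exact lt_irrefl _ this
    have key1 : ∀ y w w' : V, w ∈ L → w' ∈ L → G.Adj y w → G.Adj y w' → w = w' := by
      intro y w w' hw hw' h1 h2
      by_contra hne
      have := hcon' y w w' h1 h2 hne
      rw [hL, Finset.mem_filter] at hw hw'
      have := hdD y
      linarith [hw.2, hw'.2]
    set SHf : V → Finset V :=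
      fun w => (G.neighborFinset w).filter (fun y => (t + D)/2 < (G.degree y : ℝ)) with hSHf
    have key2 : ∀ w ∈ L, 3 ≤ (SHf w).card := by
      intro w hw
      rw [hL, Finset.mem_filter] at hw
      have hBad1 : ((G.neighborFinset w).filter
          (fun a => ¬ ((t + D)/2 < (G.degree a : ℝ)))).card ≤ 1 := by
        rw [Finset.card_le_one]
        intro a ha b hb
        by_contra hab
        rw [Finset.mem_filter] at ha hb
        have h1 := (SimpleGraph.mem_neighborFinset _ _ _).mp ha.1
        have h2 := (SimpleGraph.mem_neighborFinset _ _ _).mp hb.1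
        have := hcon' w a b h1 h2 hab
        have ha2 := not_lt.mp ha.2
        have hb2 := not_lt.mp hb.2
        linarith [hw.2]
      have hsub2 : G.neighborFinset w ⊆ (SHf w) ∪ ((G.neighborFinset w).filter
          (fun a => ¬ ((t + D)/2 < (G.degree a : ℝ)))) := by
        intro y hy
        by_cases hc : (t + D)/2 < (G.degree y : ℝ)
        · exact Finset.mem_union_left _ (by rw [hSHf]; exact Finset.mem_filter.mpr ⟨hy, hc⟩)
        · exact Finset.mem_union_right _ (Finset.mem_filter.mpr ⟨hy, hc⟩)
      have hle := (Finset.card_le_card hsub2).trans (Finset.card_union_le _ _)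
      rw [SimpleGraph.card_neighborFinset_eq_degree] at hle
      have := hδ w
      omega
    have key3 : (L : Set V).PairwiseDisjoint SHf := by
      intro w hw w' hw' hne
      simp only [Function.onFun]
      rw [Finset.disjoint_left]
      intro y hy hy'
      rw [hSHf, Finset.mem_filter] at hy hy'
      have h1 := ((SimpleGraph.mem_neighborFinset _ _ _).mp hy.1).symm
      have h2 := ((SimpleGraph.mem_neighborFinset _ _ _).mp hy'.1).symm
      exact hne (key1 y w w' hw hw' h1 h2)
    set U := L.biUnion SHf with hU
    have hsplit := Finset.sum_filter_add_sum_filter_not Finset.univ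
      (fun w => (G.degree w : ℝ) ≤ t) (fun w => (G.degree w : ℝ) - t)
    have hzero : ∑ w : V, ((G.degree w : ℝ) - t) = 0 := by
      rw [Finset.sum_sub_distrib, hsum, Finset.sum_const, Finset.card_univ, ← hn,
        nsmul_eq_mul]
      ring
    set Sur := ∑ y ∈ Finset.univ.filter (fun w => ¬((G.degree w : ℝ) ≤ t)),
      ((G.degree y : ℝ) - t) with hSur
    set Def := ∑ w ∈ L, (t - (G.degree w : ℝ)) with hDef
    have hSD : Sur = Def := by
      have h1 : (∑ x ∈ L, ((G.degree x : ℝ) - t)) + Sur = 0 := by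
        rw [hL]
        exact hsplit.trans hzero
      have h2 : Def + (∑ x ∈ L, ((G.degree x : ℝ) - t)) = 0 := by
        rw [hDef, ← Finset.sum_add_distrib]
        apply Finset.sum_eq_zero
        intro x _
        ring
      linarith
    have hUsub : U ⊆ Finset.univ.filter (fun w => ¬((G.degree w : ℝ) ≤ t)) := by
      intro y hy
      rw [hU, Finset.mem_biUnion] at hy
      obtain ⟨w, hw, hyw⟩ := hy
      rw [hSHf, Finset.mem_filter] at hyw
      rw [Finset.mem_filter]
      refine ⟨Finset.mem_univ y, ?_⟩
      push_neg
      linarith [hyw.2]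
    have hUle : ∑ y ∈ U, ((G.degree y : ℝ) - t) ≤ Sur := by
      rw [hSur]
      apply Finset.sum_le_sum_of_subset_of_nonneg hUsub
      intro y hy _
      rw [Finset.mem_filter] at hy
      have := not_le.mp hy.2
      linarith
    have hUeq : ∑ y ∈ U, ((G.degree y : ℝ) - t) =
        ∑ w ∈ L, ∑ y ∈ SHf w, ((G.degree y : ℝ) - t) := by
      rw [hU]
      exact Finset.sum_biUnion key3
    have hinner : ∀ w ∈ L, (3 : ℝ) * ((D - t)/2) ≤ ∑ y ∈ SHf w, ((G.degree y : ℝ) - t) := by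
      intro w hw
      have hcard := key2 w hw
      have hterm : ∀ y ∈ SHf w, (D - t)/2 ≤ (G.degree y : ℝ) - t := by
        intro y hy
        rw [hSHf, Finset.mem_filter] at hy
        linarith [hy.2]
      have := Finset.card_nsmul_le_sum (SHf w) (fun y => (G.degree y : ℝ) - t) ((D - t)/2)
        hterm
      rw [nsmul_eq_mul] at this
      have h3c : (3 : ℝ) ≤ ((SHf w).card : ℝ) := by exact_mod_cast hcard
      have hpos : (0 : ℝ) ≤ (D - t)/2 := by linarith
      nlinarith
    have hlow : (L.card : ℝ) * (3 * ((D - t)/2)) ≤ Def := by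
      rw [← hSD]
      calc (L.card : ℝ) * (3 * ((D - t)/2))
          = ∑ _w ∈ L, (3 : ℝ) * ((D - t)/2) := by
            rw [Finset.sum_const, nsmul_eq_mul]
        _ ≤ ∑ w ∈ L, ∑ y ∈ SHf w, ((G.degree y : ℝ) - t) := Finset.sum_le_sum hinner
        _ = ∑ y ∈ U, ((G.degree y : ℝ) - t) := hUeq.symm
        _ ≤ Sur := hUle
    set dm : ℝ := (G.minDegree : ℝ) with hdm
    have hdm_le : ∀ w : V, dm ≤ (G.degree w : ℝ) := fun w =>
      Nat.cast_le.mpr (G.minDegree_le_degree w)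
    have hhigh : Def ≤ (L.card : ℝ) * (t - dm) := by
      rw [hDef]
      calc ∑ w ∈ L, (t - (G.degree w : ℝ)) ≤ ∑ _w ∈ L, (t - dm) := by
            apply Finset.sum_le_sum
            intro w _
            linarith [hdm_le w]
        _ = (L.card : ℝ) * (t - dm) := by rw [Finset.sum_const, nsmul_eq_mul]
    have hLpos : (0 : ℝ) < (L.card : ℝ) := by
      have := Finset.card_pos.mpr hLne
      exact_mod_cast this
    have hmain : 3 * ((D - t)/2) ≤ t - dm := by
      have h := hlow.trans hhigh
      exact le_of_mul_le_mul_left (by linarith [h]) hLpos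
    have hdmt : dm ≤ t := by
      obtain ⟨w1, hw1⟩ := hLne
      rw [hL, Finset.mem_filter] at hw1
      linarith [hdm_le w1, hw1.2]
    obtain ⟨w0, hw0⟩ := G.exists_minimal_degree_vertex
    obtain ⟨a, b, h1, h2, h3⟩ := hcherry w0
    have := hcon' w0 a b h1 h2 h3
    have hda := hdD a
    have hdb := hdD b
    have hdw0 : (G.degree w0 : ℝ) = dm := by rw [hdm, hw0]
    linarith

end Cherry
section Faces

variable {V : Type*} [Fintype V] [DecidableEq V] {G : SimpleGraph V}

lemma exists_cycle_of_cyclic_seq (b : ℕ → V) (L : ℕ) (hL : 3 ≤ L)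
    (hadj : ∀ j, j < L → G.Adj (b j) (b (j+1)))
    (hcyc : b 0 = b L)
    (hinj : ∀ r s : ℕ, r < L → s < L → b r = b s → r = s) :
    ∃ (a : V) (c : G.Walk a a), c.IsCycle ∧ c.length = L := by
  classical
  have walk : ∀ k : ℕ, k ≤ L - 1 → ∃ w : G.Walk (b (L - k)) (b L),
      w.length = k ∧ w.IsPath ∧
      (∀ x ∈ w.support, ∃ t, t < L ∧ x = b t ∧ (t = 0 ∨ L - k ≤ t)) ∧
      (∀ e ∈ w.edges, ∃ t, L - k ≤ t ∧ t + 1 ≤ L ∧ e = s(b t, b (t+1))) := by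
    intro k
    induction k with
    | zero =>
      intro _
      refine ⟨SimpleGraph.Walk.nil, rfl, SimpleGraph.Walk.IsPath.nil, ?_, ?_⟩
      · intro x hx
        simp only [SimpleGraph.Walk.support_nil, List.mem_singleton] at hx
        exact ⟨0, by omega, by rw [hx, Nat.sub_zero]; exact hcyc.symm, Or.inl rfl⟩
      · intro e he
        simp at he
    | succ k ih =>
      intro hk
      obtain ⟨w, hlen, hpath, hsupp, hedge⟩ := ih (by omega)
      have hstep : L - (k+1) + 1 = L - k := by omega
      have hadj' : G.Adj (b (L - (k+1))) (b (L - k)) := by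
        have := hadj (L - (k+1)) (by omega)
        rwa [hstep] at this
      refine ⟨SimpleGraph.Walk.cons hadj' w, ?_, ?_, ?_, ?_⟩
      · simp [hlen]
      · rw [SimpleGraph.Walk.cons_isPath_iff]
        refine ⟨hpath, fun hmem => ?_⟩
        obtain ⟨t, htL, hxt, hcases⟩ := hsupp _ hmem
        have heq := hinj _ _ (by omega) htL hxt
        rcases hcases with rfl | hge <;> omega
      · intro x hx
        rw [SimpleGraph.Walk.support_cons] at hx
        rcases List.mem_cons.mp hx with rfl | hx
        · exact ⟨L - (k+1), by omega, rfl, Or.inr (by omega)⟩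
        · obtain ⟨t, h1, h2, h3⟩ := hsupp x hx
          exact ⟨t, h1, h2, by omega⟩
      · intro e he
        rw [SimpleGraph.Walk.edges_cons] at he
        rcases List.mem_cons.mp he with rfl | he
        · exact ⟨L - (k+1), le_refl _, by omega, by rw [hstep]⟩
        · obtain ⟨t, h1, h2, h3⟩ := hedge e he
          exact ⟨t, by omega, h2, h3⟩
  obtain ⟨w, hlen, hpath, hsupp, hedge⟩ := walk (L-1) (le_refl _)
  have hb1 : L - (L-1) = 1 := by omega
  let w' : G.Walk (b 1) (b 0) := (w.copy (congrArg b hb1) hcyc.symm)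
  have hw'path : w'.IsPath := by
    simp only [w', SimpleGraph.Walk.isPath_copy]
    exact hpath
  have hw'edges : w'.edges = w.edges := by
    simp [w']
  have hadj0 : G.Adj (b 0) (b 1) := hadj 0 (by omega)
  have hnotmem : s(b 0, b 1) ∉ w'.edges := by
    rw [hw'edges]
    intro hmem
    obtain ⟨t, ht1, ht2, ht3⟩ := hedge _ hmem
    rw [hb1] at ht1
    rcases Sym2.eq_iff.mp ht3 with ⟨h1, h2⟩ | ⟨h1, h2⟩
    · have := hinj 0 t (by omega) (by omega) h1
      omega
    · have h4 := hinj 1 t (by omega) (by omega) h2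
      have h5 := hinj 0 (t+1) (by omega) (by omega) (by rw [h1])
      omega
  refine ⟨b 0, SimpleGraph.Walk.cons hadj0 w', ?_, ?_⟩
  · exact (SimpleGraph.Walk.cons_isCycle_iff w' hadj0).mpr ⟨hw'path, hnotmem⟩
  · have : w'.length = w.length := by simp [w']
    rw [SimpleGraph.Walk.length_cons, this, hlen]
    omega

lemma girth_le_of_cycle {a : V} (c : G.Walk a a) (hc : c.IsCycle) : G.girth ≤ c.length := by
  have h1 : G.egirth ≤ (c.length : ℕ∞) :=
    iInf_le_of_le a (iInf_le_of_le c (iInf_le_of_le hc le_rfl))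
  have h2 := ENat.toNat_le_toNat h1 (by simp)
  simpa [SimpleGraph.girth] using h2

end Faces
namespace SimpleGraph.EmbeddingScheme

variable {V : Type*} [Fintype V] [DecidableEq V] {G : SimpleGraph V} [DecidableRel G.Adj]
  (S : G.EmbeddingScheme)

lemma faceMap_apply (q : G.Dart × ℤˣ) :
    (S.faceMap q).1 = (S.rot ^ (((q.2 * S.sign q.1) : ℤˣ) : ℤ)) q.1.symm := rfl

lemma rot_pow_fst (k : ℕ) (d : G.Dart) : ((S.rot ^ k) d).toProd.1 = d.toProd.1 := by
  induction k generalizing d with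
  | zero => simp
  | succ k ih =>
    rw [pow_succ, Equiv.Perm.mul_apply, ih (S.rot d)]
    exact S.rot_fst d

lemma rot_inv_fst (d : G.Dart) : (S.rot⁻¹ d).toProd.1 = d.toProd.1 := by
  have h := S.rot_fst (S.rot⁻¹ d)
  rw [show S.rot (S.rot⁻¹ d) = d from S.rot.apply_symm_apply d] at h
  exact h.symm

lemma rot_inv_pow_fst (k : ℕ) (d : G.Dart) : ((S.rot⁻¹ ^ k) d).toProd.1 = d.toProd.1 := by
  induction k generalizing d with
  | zero => simp
  | succ k ih =>
    rw [pow_succ, Equiv.Perm.mul_apply, ih (S.rot⁻¹ d)]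
    exact S.rot_inv_fst d

lemma rot_zpow_fst (k : ℤ) (d : G.Dart) : ((S.rot ^ k) d).toProd.1 = d.toProd.1 := by
  cases k with
  | ofNat n => rw [Int.ofNat_eq_coe, zpow_natCast]; exact S.rot_pow_fst n d
  | negSucc n =>
    rw [zpow_negSucc, ← inv_pow]
    exact S.rot_inv_pow_fst (n+1) d

lemma rot_ne (hdeg : ∀ w : V, 2 ≤ G.degree w) (d : G.Dart) : S.rot d ≠ d := by
  have hmem : d.toProd.2 ∈ G.neighborFinset d.toProd.1 := by
    rw [SimpleGraph.mem_neighborFinset]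
    exact d.adj
  have h2 : 1 ≤ ((G.neighborFinset d.toProd.1).erase d.toProd.2).card := by
    rw [Finset.card_erase_of_mem hmem, SimpleGraph.card_neighborFinset_eq_degree]
    have := hdeg d.toProd.1
    omega
  obtain ⟨y, hy⟩ := Finset.card_pos.mp h2
  rw [Finset.mem_erase] at hy
  have hyadj : G.Adj d.toProd.1 y := (SimpleGraph.mem_neighborFinset _ _ _).mp hy.2
  set e : G.Dart := ⟨(d.toProd.1, y), hyadj⟩ with he
  have hne : e ≠ d := by
    intro h
    have := congrArg (fun x : G.Dart => x.toProd.2) h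
    exact hy.1 this
  obtain ⟨k, hk⟩ := S.rot_cyclic d e rfl
  intro hfix
  have hall : ∀ m : ℕ, (S.rot ^ m) d = d := by
    intro m
    induction m with
    | zero => simp
    | succ m ih => rw [pow_succ', Equiv.Perm.mul_apply, ih, hfix]
  rw [hall k] at hk
  exact hne hk.symm

lemma rot_zpow_unit_ne (hdeg : ∀ w : V, 2 ≤ G.degree w) (ε : ℤˣ) (d : G.Dart) :
    (S.rot ^ (ε : ℤ)) d ≠ d := by
  rcases Int.units_eq_one_or ε with h | h
  · rw [h]
    simpa using S.rot_ne hdeg d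
  · rw [h]
    simp only [Units.coe_neg_one, zpow_neg, zpow_one]
    intro hfix
    have : d = S.rot d := by
      conv_lhs => rw [← (show S.rot (S.rot⁻¹ d) = d from S.rot.apply_symm_apply d)]
      rw [hfix]
    exact S.rot_ne hdeg d this.symm

lemma faceMap_fst (q : G.Dart × ℤˣ) :
    (S.faceMap q).1.toProd.1 = q.1.toProd.2 := by
  rw [S.faceMap_apply, S.rot_zpow_fst]
  simp [SimpleGraph.Dart.symm]

lemma faceMap_ne_symm (hdeg : ∀ w : V, 2 ≤ G.degree w) (q : G.Dart × ℤˣ) :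
    (S.faceMap q).1 ≠ q.1.symm := by
  rw [S.faceMap_apply]
  exact S.rot_zpow_unit_ne hdeg _ _

lemma faceMap_no_fixed (q : G.Dart × ℤˣ) : S.faceMap q ≠ q := by
  intro h
  have h1 := S.faceMap_fst q
  rw [h] at h1
  exact q.1.adj.ne h1

lemma orbit_girth (hdeg : ∀ w : V, 2 ≤ G.degree w) (p : G.Dart × ℤˣ) (ℓ : ℕ)
    (hℓ1 : 1 ≤ ℓ) (hper : (S.faceMap ^ ℓ) p = p) :
    ∃ (aa : V) (c : G.Walk aa aa), c.IsCycle ∧ c.length ≤ ℓ := by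
  classical
  set f : ℕ → G.Dart := fun i => ((S.faceMap ^ i) p).1 with hf
  set a : ℕ → V := fun i => (f i).toProd.1 with ha
  have hstep : ∀ i, f (i+1) = (S.faceMap ((S.faceMap ^ i) p)).1 := by
    intro i
    rw [hf]
    simp only [pow_succ', Equiv.Perm.mul_apply]
  have hchain : ∀ i, a (i+1) = (f i).toProd.2 := by
    intro i
    rw [ha]
    simp only [hstep i]
    exact S.faceMap_fst _
  have hadj : ∀ i, G.Adj (a i) (a (i+1)) := by
    intro i
    rw [hchain i]
    exact (f i).adj
  have hnb : ∀ i, f (i+1) ≠ (f i).symm := by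
    intro i
    rw [hstep i]
    exact S.faceMap_ne_symm hdeg _
  have hclose : a 0 = a ℓ := by
    rw [ha, hf]
    simp [hper]
  set Q : Set ℕ := {q | 1 ≤ q ∧ ∃ i, i + q ≤ ℓ ∧ a i = a (i + q)} with hQ
  have hQne : ℓ ∈ Q := ⟨hℓ1, 0, by omega, by simpa using hclose⟩
  set q0 := sInf Q with hq0
  have hq0mem : q0 ∈ Q := Nat.sInf_mem ⟨ℓ, hQne⟩
  obtain ⟨hq01, i0, hi0, heq0⟩ := hq0mem
  have hq0le : q0 ≤ ℓ := Nat.sInf_le hQne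
  have hmin : ∀ q, q < q0 → q ∉ Q := fun q hq hmem => absurd (Nat.sInf_le hmem) (by omega)
  have hq0ne1 : q0 ≠ 1 := by
    intro h1
    rw [h1] at heq0
    exact (hadj i0).ne heq0
  have hq0ne2 : q0 ≠ 2 := by
    intro h2
    rw [h2] at heq0
    apply hnb i0
    apply SimpleGraph.Dart.ext
    have h1 : (f (i0+1)).toProd.1 = a (i0+1) := rfl
    have h2' : (f (i0+1)).toProd.2 = a (i0+2) := (hchain (i0+1)).symm
    have h3 : ((f i0).symm).toProd = ((f i0).toProd.2, (f i0).toProd.1) := rfl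
    rw [h3]
    apply Prod.ext
    · rw [h1, ← hchain i0]
    · rw [h2']
      show a (i0 + 2) = a i0
      exact heq0.symm
  have hq03 : 3 ≤ q0 := by omega
  have hinj : ∀ r s : ℕ, r < q0 → s < q0 → a (i0 + r) = a (i0 + s) → r = s := by
    intro r s hr hs hrs
    by_contra hne
    rcases Nat.lt_or_ge r s with h | h
    · refine hmin (s - r) (by omega) ⟨by omega, i0 + r, by omega, ?_⟩
      rw [show i0 + r + (s - r) = i0 + s by omega]
      exact hrs
    · refine hmin (r - s) (by omega) ⟨by omega, i0 + s, by omega, ?_⟩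
      rw [show i0 + s + (r - s) = i0 + r by omega]
      exact hrs.symm
  obtain ⟨aa, c, hc, hclen⟩ := exists_cycle_of_cyclic_seq (fun j => a (i0 + j)) q0 hq03
    (fun j _ => hadj (i0 + j)) heq0 hinj
  exact ⟨aa, c, hc, hclen ▸ hq0le⟩

include S in
lemma not_acyclic (hdeg : ∀ w : V, 2 ≤ G.degree w) (d : G.Dart) : ¬ G.IsAcyclic := by
  have hper : (S.faceMap ^ (orderOf S.faceMap)) ((d, 1) : G.Dart × ℤˣ) = (d, 1) := by
    rw [pow_orderOf_eq_one]
    rfl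
  have h1 : 1 ≤ orderOf S.faceMap := orderOf_pos _
  obtain ⟨aa, c, hc, -⟩ := S.orbit_girth hdeg (d, 1) _ h1 hper
  exact fun hac => hac c hc

lemma girth_mul_le (hdeg : ∀ w : V, 2 ≤ G.degree w) :
    G.girth * permNumOrbits S.faceMap ≤ 4 * G.edgeFinset.card := by
  classical
  have hfix : (Finset.univ.filter fun a => S.faceMap a = a) = ∅ := by
    rw [Finset.filter_eq_empty_iff]
    intro q _
    exact S.faceMap_no_fixed q
  have hNO : permNumOrbits S.faceMap = Multiset.card S.faceMap.cycleType := by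
    rw [permNumOrbits, hfix]
    simp
  have hpart : ∀ x ∈ S.faceMap.cycleType, G.girth ≤ x := by
    intro x hx
    rw [Equiv.Perm.cycleType_def, Multiset.mem_map] at hx
    obtain ⟨c, hc, rfl⟩ := hx
    have hc' : c ∈ S.faceMap.cycleFactorsFinset := hc
    obtain ⟨hcyc, hsupp⟩ := Equiv.Perm.mem_cycleFactorsFinset_iff.mp hc'
    have hcyc2 := hcyc
    obtain ⟨p, hp1, -⟩ := hcyc2
    have hpmem : p ∈ c.support := Equiv.Perm.mem_support.mpr hp1
    have hppow : ∀ k : ℕ, ((S.faceMap ^ k) p = (c ^ k) p) ∧ (c ^ k) p ∈ c.support := by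
      intro k
      induction k with
      | zero => simpa using hpmem
      | succ k ih =>
        refine ⟨?_, ?_⟩
        · rw [pow_succ', Equiv.Perm.mul_apply, ih.1, ← hsupp _ ih.2, ← Equiv.Perm.mul_apply,
            ← pow_succ']
        · rw [pow_succ', Equiv.Perm.mul_apply]
          exact Equiv.Perm.apply_mem_support.mpr ih.2
    have hord : (c ^ c.support.card) p = p := by
      rw [← Equiv.Perm.IsCycle.orderOf hcyc, pow_orderOf_eq_one]
      rfl
    have hper : (S.faceMap ^ c.support.card) p = p := by
      rw [(hppow _).1, hord]
    have hℓ1 : 1 ≤ c.support.card := by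
      have := hcyc.two_le_card_support
      omega
    obtain ⟨aa, cw, hcw, hlen⟩ := S.orbit_girth hdeg p _ hℓ1 hper
    exact le_trans (girth_le_of_cycle cw hcw) hlen
  have hmul := Multiset.card_nsmul_le_sum hpart
  rw [Equiv.Perm.sum_cycleType] at hmul
  have hsupple : S.faceMap.support.card ≤ Fintype.card (G.Dart × ℤˣ) :=
    Finset.card_le_univ _
  have hcard : Fintype.card (G.Dart × ℤˣ) = 4 * G.edgeFinset.card := by
    rw [Fintype.card_prod, SimpleGraph.dart_card_eq_twice_card_edges, Fintype.card_units_int]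
    ring
  rw [smul_eq_mul] at hmul
  calc G.girth * permNumOrbits S.faceMap
      = Multiset.card S.faceMap.cycleType * G.girth := by rw [hNO]; ring
    _ ≤ S.faceMap.support.card := hmul
    _ ≤ 4 * G.edgeFinset.card := hcard ▸ hsupple

end SimpleGraph.EmbeddingScheme
/-- bound on the total restrained bondage number via girth and the
largest Euler characteristic of a surface on which `G` is embeddable. -/
theorem statement_14 {V : Type*} [Fintype V] [DecidableEq V] (G : SimpleGraph V)
    [DecidableRel G.Adj] (hconn : G.Connected) (hδ : 4 ≤ G.minDegree)
    (hcard : 5 ≤ Fintype.card V) (χ : ℤ)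
    (hemb : ∃ S : G.EmbeddingScheme, S.eulerChar = χ)
    (hmax : ∀ S : G.EmbeddingScheme, S.eulerChar ≤ χ)
    (g : ℕ) (hg : G.girth = (g : ℕ∞)) :
    ∃ b : ℕ, G.totalRestrainedBondageNumber = (b : ℕ∞) ∧
      (b : ℝ) ≤ (4 * (g : ℝ) / ((g : ℝ) - 2)) * (1 - (χ : ℝ) / (Fintype.card V : ℝ)) +
          (G.maxDegree : ℝ) - 4 ∧
      (4 * (g : ℝ) / ((g : ℝ) - 2)) * (1 - (χ : ℝ) / (Fintype.card V : ℝ)) +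
          (G.maxDegree : ℝ) - 4 ≤
        -12 * (χ : ℝ) / (Fintype.card V : ℝ) + (G.maxDegree : ℝ) + 8 := by
  classical
  have hNe : Nonempty V := Fintype.card_pos_iff.mp (by omega)
  have hdeg : ∀ w : V, 4 ≤ G.degree w := fun w => le_trans hδ (G.minDegree_le_degree w)
  have hdeg2 : ∀ w : V, 2 ≤ G.degree w := fun w => le_trans (by norm_num) (hdeg w)
  set nr : ℝ := (Fintype.card V : ℝ) with hnr
  set mr : ℝ := (G.edgeFinset.card : ℝ) with hmr
  set D : ℝ := (G.maxDegree : ℝ) with hD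
  have hn0 : (0:ℝ) < nr := by
    rw [hnr]
    have : (5:ℝ) ≤ (Fintype.card V : ℝ) := by exact_mod_cast hcard
    linarith
  have hm0 : (0:ℝ) ≤ mr := by positivity
  -- cherry + construction
  obtain ⟨u, v, v', huv, huv', hvv', hsum3⟩ := cherry_exists G hdeg
  obtain ⟨F, hFsub, hFcard, hFiso, hFlt⟩ := construction_main G hdeg huv huv' hvv'
  -- the bondage number is attained below F.card
  have hKle : G.totalRestrainedBondageNumber ≤ (F.card : ℕ∞) :=
    sInf_le ⟨F, hFsub, rfl, hFiso, hFlt⟩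
  have hKne : G.totalRestrainedBondageNumber ≠ ⊤ :=
    (lt_of_le_of_lt hKle (lt_of_le_of_ne le_top (ENat.coe_ne_top _))).ne
  set b : ℕ := (G.totalRestrainedBondageNumber).toNat with hb
  have hbK : (b : ℕ∞) = G.totalRestrainedBondageNumber := ENat.coe_toNat hKne
  have hbF : b ≤ F.card := by
    have h := ENat.toNat_le_toNat hKle (ENat.coe_ne_top _)
    rwa [ENat.toNat_coe] at h
  -- girth facts
  obtain ⟨S, hSchi⟩ := hemb
  have hgnat : G.girth = g := by exact_mod_cast hg
  have hac : ¬ G.IsAcyclic := S.not_acyclic hdeg2 ⟨(u, v), huv⟩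
  have hg3 : 3 ≤ g := hgnat ▸ SimpleGraph.three_le_girth hac
  have hgr3 : (3:ℝ) ≤ (g:ℝ) := by exact_mod_cast hg3
  have hgr0 : (0:ℝ) < (g:ℝ) := by linarith
  have hgr2 : (0:ℝ) < (g:ℝ) - 2 := by linarith
  -- face counting
  have hcount : g * permNumOrbits S.faceMap ≤ 4 * G.edgeFinset.card := by
    rw [← hgnat]
    exact S.girth_mul_le hdeg2
  have hNOr : (permNumOrbits S.faceMap : ℝ) ≤ 4 * mr / (g:ℝ) := by
    rw [le_div_iff₀ hgr0]
    have : ((g * permNumOrbits S.faceMap : ℕ) : ℝ) ≤ ((4 * G.edgeFinset.card : ℕ) : ℝ) := by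
      exact_mod_cast hcount
    push_cast at this
    linarith
  have hfr : (S.numFaces : ℝ) ≤ 2 * mr / (g:ℝ) := by
    have h1 : (S.numFaces : ℝ) ≤ (permNumOrbits S.faceMap : ℝ) / 2 := by
      rw [SimpleGraph.EmbeddingScheme.numFaces]
      exact_mod_cast Nat.cast_div_le (α := ℝ)
    calc (S.numFaces : ℝ) ≤ (permNumOrbits S.faceMap : ℝ) / 2 := h1
      _ ≤ (4 * mr / (g:ℝ)) / 2 := by linarith
      _ = 2 * mr / (g:ℝ) := by ring
  have hchi : (χ : ℝ) = nr - mr + (S.numFaces : ℝ) := by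
    have h := hSchi
    rw [SimpleGraph.EmbeddingScheme.eulerChar] at h
    have h2 : ((Fintype.card V : ℤ) - (G.edgeFinset.card : ℤ) + (S.numFaces : ℤ) : ℤ) = χ := h
    have := congrArg (fun z : ℤ => (z : ℝ)) h2
    push_cast at this
    rw [hnr, hmr]
    linarith
  -- main chain
  have hF4 : (F.card : ℝ) + 4 ≤ 4 * mr / nr + D := by
    have h1 : ((F.card + 4 : ℕ) : ℝ) ≤ ((G.degree u + G.degree v + G.degree v' : ℕ) : ℝ) := by
      exact_mod_cast hFcard
    push_cast at h1
    rw [hnr, hmr, hD]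
    have h2 := hsum3
    push_cast at h2
    linarith
  have hq_lb : (mr - 2 * mr / (g:ℝ)) / nr ≤ 1 - (χ:ℝ) / nr := by
    rw [hchi]
    have h1 : 1 - (nr - mr + (S.numFaces : ℝ)) / nr = (mr - (S.numFaces : ℝ)) / nr := by
      field_simp
      ring
    rw [h1]
    gcongr

  have h2mg : 2 * mr / (g:ℝ) ≤ mr := by
    rw [div_le_iff₀ hgr0]
    nlinarith
  have hq0 : (0:ℝ) ≤ (mr - 2 * mr / (g:ℝ)) / nr := by
    apply div_nonneg _ (le_of_lt hn0)
    linarith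
  have hq0' : (0:ℝ) ≤ 1 - (χ:ℝ)/nr := le_trans hq0 hq_lb
  have hcoef_pos : (0:ℝ) ≤ 4 * (g:ℝ) / ((g:ℝ) - 2) := by positivity
  have hkey : 4 * mr / nr ≤ (4 * (g:ℝ) / ((g:ℝ) - 2)) * (1 - (χ:ℝ)/nr) := by
    have heq : (4 * (g:ℝ) / ((g:ℝ) - 2)) * ((mr - 2 * mr / (g:ℝ)) / nr) = 4 * mr / nr := by
      field_simp
    calc 4 * mr / nr = (4 * (g:ℝ) / ((g:ℝ) - 2)) * ((mr - 2 * mr / (g:ℝ)) / nr) := heq.symm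
      _ ≤ (4 * (g:ℝ) / ((g:ℝ) - 2)) * (1 - (χ:ℝ)/nr) :=
          mul_le_mul_of_nonneg_left hq_lb hcoef_pos
  have hc12 : 4 * (g:ℝ) / ((g:ℝ) - 2) ≤ 12 := by
    rw [div_le_iff₀ hgr2]
    linarith
  refine ⟨b, hbK.symm, ?_, ?_⟩
  · have hbr : (b:ℝ) ≤ (F.card : ℝ) := by exact_mod_cast hbF
    calc (b:ℝ) ≤ (F.card : ℝ) := hbr
      _ ≤ 4 * mr / nr + D - 4 := by linarith [hF4]
      _ ≤ (4 * (g:ℝ)/((g:ℝ)-2)) * (1 - (χ:ℝ)/nr) + D - 4 := by linarith [hkey]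
  · have h12 : (4 * (g:ℝ)/((g:ℝ)-2)) * (1 - (χ:ℝ)/nr) ≤ 12 * (1 - (χ:ℝ)/nr) :=
      mul_le_mul_of_nonneg_right hc12 hq0'
    have hgoal : -12 * (χ:ℝ) / nr + D + 8 = 12 * (1 - (χ:ℝ)/nr) + D - 4 := by
      field_simp
      ring
    linarith [h12]
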